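/- Let m, n be positive integers, let 𝔪 be a regular (maximal-rank) nilpotent endomorphism of V = ℂ^m and 𝔫 a regular nilpotent endomorphism of W = ℂ^n. Then the endomorphism 𝔩 = 𝔪 ⊗ 1_W + 1_V ⊗ 𝔫 of V ⊗ W has rank mn − min(m, n). -/

import Mathlib

open TensorProduct


set_option maxHeartbeats 800000
set_option synthInstance.maxHeartbeats 200000

open Module LinearMap Polynomial

lemma nilp_pow_dim_eq_zero {m : ℕ} (f : Module.End ℂ (Fin m → ℂ)) (h : IsNilpotent f) :
    f ^ m = 0 := by
  have h1 := h.charpoly_eq_X_pow_finrank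
  have h2 := LinearMap.aeval_self_charpoly f
  rw [h1, map_pow, aeval_X, Module.finrank_fin_fun] at h2
  exact h2

lemma finrank_ker_pow_le {m : ℕ} (f : Module.End ℂ (Fin m → ℂ)) (k : ℕ) :
    finrank ℂ (LinearMap.ker (f ^ k)) ≤ k * finrank ℂ (LinearMap.ker f) := by
  induction k with
  | zero => rw [pow_zero]; simp [Module.End.one_eq_id]; exact finrank_bot ..
  | succ k ih =>
    have hle : ∀ x ∈ LinearMap.ker (f ^ (k+1)), f x ∈ LinearMap.ker (f ^ k) := by
      intro x hx
      simp only [LinearMap.mem_ker] at hx ⊢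
      rw [← Module.End.mul_apply, ← pow_succ]
      exact hx
    set g := f.restrict hle with hg
    have h1 : finrank ℂ (LinearMap.ker (f ^ (k+1))) =
        finrank ℂ (LinearMap.range g) + finrank ℂ (LinearMap.ker g) :=
      (LinearMap.finrank_range_add_finrank_ker g).symm
    have h2 : finrank ℂ (LinearMap.range g) ≤ finrank ℂ (LinearMap.ker (f ^ k)) :=
      (LinearMap.range g).finrank_le
    have hker : LinearMap.ker f ≤ LinearMap.ker (f ^ (k+1)) := by
      intro x hx
      simp only [LinearMap.mem_ker] at hx ⊢
      rw [pow_succ, Module.End.mul_apply, hx, map_zero]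
    have h3 : finrank ℂ (LinearMap.ker g) = finrank ℂ (LinearMap.ker f) := by
      rw [LinearMap.ker_restrict]
      exact (Submodule.comapSubtypeEquivOfLe hker).finrank_eq
    calc finrank ℂ (LinearMap.ker (f ^ (k+1)))
        ≤ finrank ℂ (LinearMap.ker (f ^ k)) + finrank ℂ (LinearMap.ker f) := by omega
      _ ≤ (k+1) * finrank ℂ (LinearMap.ker f) := by
          rw [add_mul, one_mul]; omega

lemma exists_cyclic_basis {m : ℕ} (hm : 0 < m) (f : Module.End ℂ (Fin m → ℂ))
    (hfnil : IsNilpotent f) (hf : finrank ℂ (LinearMap.range f) = m - 1) :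
    ∃ b : Basis (Fin m) ℂ (Fin m → ℂ),
      ∀ i : Fin m, f (b i) = if h : i.val + 1 < m then b ⟨i.val + 1, h⟩ else 0 := by
  have hpow : f ^ m = 0 := nilp_pow_dim_eq_zero f hfnil
  have hpow' : ∀ e, m ≤ e → f ^ e = 0 := fun e he => pow_eq_zero_of_le he hpow
  have hkerf : finrank ℂ (LinearMap.ker f) = 1 := by
    have := LinearMap.finrank_range_add_finrank_ker f
    rw [hf, Module.finrank_fin_fun] at this
    omega
  -- f ^ (m-1) ≠ 0
  have hne : f ^ (m - 1) ≠ 0 := by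
    intro h0
    have h1 : LinearMap.ker (f ^ (m-1)) = ⊤ := by rw [h0]; exact LinearMap.ker_zero
    have h2 := finrank_ker_pow_le f (m-1)
    rw [h1, hkerf, mul_one] at h2
    have : finrank ℂ (⊤ : Submodule ℂ (Fin m → ℂ)) = m := by
      rw [finrank_top, Module.finrank_fin_fun]
    omega
  obtain ⟨v, hv⟩ : ∃ v, (f ^ (m-1)) v ≠ 0 := by
    by_contra hc
    push_neg at hc
    exact hne (LinearMap.ext fun x => hc x)
  -- linear independence of iterates
  have hli : LinearIndependent ℂ (fun i : Fin m => (f ^ (i : ℕ)) v) := by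
    rw [Fintype.linearIndependent_iff]
    intro c hc
    have key : ∀ t, ∀ (ht : t < m), c ⟨t, ht⟩ = 0 := by
      intro t
      induction t using Nat.strong_induction_on with
      | _ t ih =>
        intro htm
        have happ := congrArg (f ^ (m - 1 - t)) hc
        rw [map_zero, map_sum] at happ
        have hterm : ∀ i : Fin m, i ∈ Finset.univ → i ≠ (⟨t, htm⟩ : Fin m) →
            (f ^ (m - 1 - t)) (c i • (f ^ (i : ℕ)) v) = 0 := by
          intro i _ hne'
          rw [map_smul]
          rcases lt_or_gt_of_ne (fun h => hne' (Fin.ext h) : (i : ℕ) ≠ t) with hlt | hgt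
          · have := ih i hlt i.2
            rw [show (⟨(i:ℕ), i.2⟩ : Fin m) = i from Fin.ext rfl] at this
            rw [this, zero_smul]
          · have : (f ^ (m - 1 - t)) ((f ^ (i : ℕ)) v) = (f ^ (m - 1 - t + (i:ℕ))) v := by
              rw [pow_add, Module.End.mul_apply]
            rw [this, hpow' _ (by omega), LinearMap.zero_apply, smul_zero]
        rw [Finset.sum_eq_single_of_mem (⟨t, htm⟩ : Fin m) (Finset.mem_univ _) hterm] at happ
        rw [map_smul] at happ
        have heq : (f ^ (m - 1 - t)) ((f ^ t) v) = (f ^ (m - 1)) v := by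
          rw [← Module.End.mul_apply, ← pow_add, show m - 1 - t + t = m - 1 by omega]
        rw [heq] at happ
        exact (smul_eq_zero.mp happ).resolve_right hv
    intro i
    have := key i.val i.2
    rwa [show (⟨(i:ℕ), i.2⟩ : Fin m) = i from Fin.ext rfl] at this
  have hcard : Fintype.card (Fin m) = finrank ℂ (Fin m → ℂ) := by
    simp [Module.finrank_fin_fun]
  haveI : Nonempty (Fin m) := ⟨⟨0, hm⟩⟩
  refine ⟨basisOfLinearIndependentOfCardEqFinrank hli hcard, ?_⟩
  intro i
  rw [coe_basisOfLinearIndependentOfCardEqFinrank]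
  have hstep : f ((f ^ (i:ℕ)) v) = (f ^ ((i:ℕ)+1)) v := by rw [pow_succ']; rfl
  split
  · exact hstep
  · have h0 : f ^ ((i:ℕ)+1) = 0 := by
      have : (i : ℕ) + 1 = m := by omega
      rw [this]; exact hpow
    show f ((f ^ (i:ℕ)) v) = 0
    rw [hstep, h0, LinearMap.zero_apply]

noncomputable def Lmap (m n : ℕ) : ((Fin m × Fin n) → ℂ) →ₗ[ℂ] ((Fin m × Fin n) → ℂ) where
  toFun x := fun p =>
    (if _ : 0 < p.1.val then x (⟨p.1.val - 1, lt_of_le_of_lt (Nat.sub_le _ _) p.1.2⟩, p.2) else 0) +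
    (if _ : 0 < p.2.val then x (p.1, ⟨p.2.val - 1, lt_of_le_of_lt (Nat.sub_le _ _) p.2.2⟩) else 0)
  map_add' x y := by
    funext p
    simp only [Pi.add_apply]
    split_ifs <;> ring
  map_smul' a x := by
    funext p
    simp only [Pi.smul_apply, RingHom.id_apply, smul_eq_mul]
    split_ifs <;> ring

noncomputable def cext (μ : ℕ) (c : Fin μ → ℂ) (t : ℕ) : ℂ :=
  if h : t < μ then c ⟨t, h⟩ else 0

lemma cext_add (μ : ℕ) (c c' : Fin μ → ℂ) (t : ℕ) :
    cext μ (c + c') t = cext μ c t + cext μ c' t := by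
  unfold cext; split <;> simp

lemma cext_smul (μ : ℕ) (a : ℂ) (c : Fin μ → ℂ) (t : ℕ) :
    cext μ (a • c) t = a * cext μ c t := by
  unfold cext; split <;> simp

noncomputable def Psi (m n : ℕ) : (Fin (min m n) → ℂ) →ₗ[ℂ] ((Fin m × Fin n) → ℂ) where
  toFun c := fun p => if max m n ≤ p.1.val + p.2.val + 1 then
      (-1:ℂ)^(m - 1 - p.1.val) * cext (min m n) c (p.1.val + p.2.val + 1 - max m n) else 0
  map_add' c c' := by
    funext p
    simp only [Pi.add_apply]
    split
    · rw [cext_add]; ring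
    · rw [add_zero]
  map_smul' a c := by
    funext p
    simp only [Pi.smul_apply, RingHom.id_apply, smul_eq_mul]
    split
    · rw [cext_smul]; ring
    · rw [mul_zero]

noncomputable def Phi0 (m n : ℕ) (hm : 0 < m) (hn : 0 < n) :
    ((Fin m × Fin n) → ℂ) →ₗ[ℂ] (Fin (min m n) → ℂ) where
  toFun x := fun t => x (⟨m - 1, by omega⟩, ⟨(max m n - m) + t.val, by have := t.2; omega⟩)
  map_add' _ _ := rfl
  map_smul' _ _ := rfl

lemma Lmap_Psi (m n : ℕ) (hm : 0 < m) (hn : 0 < n) (c : Fin (min m n) → ℂ) :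
    Lmap m n (Psi m n c) = 0 := by
  funext p
  obtain ⟨i, j⟩ := p
  show (if _ : 0 < i.val then Psi m n c (⟨i.val - 1, _⟩, j) else 0) +
    (if _ : 0 < j.val then Psi m n c (i, ⟨j.val - 1, _⟩) else 0) = 0
  have hi := i.2
  have hj := j.2
  by_cases hk : max m n ≤ i.val + j.val
  · have hi0 : 0 < i.val := by omega
    have hj0 : 0 < j.val := by omega
    rw [dif_pos hi0, dif_pos hj0]
    show (if max m n ≤ (i.val - 1) + j.val + 1 then
        (-1:ℂ)^(m - 1 - (i.val - 1)) * cext (min m n) c ((i.val - 1) + j.val + 1 - max m n) else 0) +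
      (if max m n ≤ i.val + (j.val - 1) + 1 then
        (-1:ℂ)^(m - 1 - i.val) * cext (min m n) c (i.val + (j.val - 1) + 1 - max m n) else 0) = 0
    rw [if_pos (by omega), if_pos (by omega)]
    have e1 : (i.val - 1) + j.val + 1 - max m n = i.val + (j.val - 1) + 1 - max m n := by omega
    have e2 : m - 1 - (i.val - 1) = (m - 1 - i.val) + 1 := by omega
    rw [e1, e2, pow_succ]
    ring
  · have h1 : (if _ : 0 < i.val then Psi m n c (⟨i.val - 1, lt_of_le_of_lt (Nat.sub_le _ _) i.2⟩, j) else 0) = 0 := by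
      split
      · show (if max m n ≤ (i.val - 1) + j.val + 1 then _ else 0) = 0
        rw [if_neg (by omega)]
      · rfl
    have h2 : (if _ : 0 < j.val then Psi m n c (i, ⟨j.val - 1, lt_of_le_of_lt (Nat.sub_le _ _) j.2⟩) else 0) = 0 := by
      split
      · show (if max m n ≤ i.val + (j.val - 1) + 1 then _ else 0) = 0
        rw [if_neg (by omega)]
      · rfl
    rw [h1, h2, add_zero]

lemma Phi0_Psi (m n : ℕ) (hm : 0 < m) (hn : 0 < n) (c : Fin (min m n) → ℂ) :
    Phi0 m n hm hn (Psi m n c) = c := by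
  funext t
  have ht := t.2
  show (if max m n ≤ (m - 1) + ((max m n - m) + t.val) + 1 then
      (-1:ℂ)^(m - 1 - (m - 1)) * cext (min m n) c ((m - 1) + ((max m n - m) + t.val) + 1 - max m n) else 0) = c t
  rw [if_pos (by omega)]
  have e1 : m - 1 - (m - 1) = 0 := by omega
  have e2 : (m - 1) + ((max m n - m) + t.val) + 1 - max m n = t.val := by omega
  rw [e1, e2, pow_zero, one_mul]
  unfold cext
  rw [dif_pos t.2]

lemma Psi_Phi0 (m n : ℕ) (hm : 0 < m) (hn : 0 < n) (x : (Fin m × Fin n) → ℂ)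
    (hx : Lmap m n x = 0) : Psi m n (Phi0 m n hm hn x) = x := by
  classical
  set X : ℕ → ℕ → ℂ := fun a b =>
    if h : a < m ∧ b < n then x (⟨a, h.1⟩, ⟨b, h.2⟩) else 0 with hX
  have Xval : ∀ (a b : ℕ) (ha : a < m) (hb : b < n), X a b = x (⟨a, ha⟩, ⟨b, hb⟩) := by
    intro a b ha hb
    rw [hX]
    exact dif_pos ⟨ha, hb⟩
  have Xout : ∀ (a b : ℕ), m ≤ a ∨ n ≤ b → X a b = 0 := by
    intro a b h
    rw [hX]
    exact dif_neg (by omega)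
  have C : ∀ (a b : ℕ) (ha : a < m) (hb : b < n),
      (if 0 < a then X (a-1) b else 0) + (if 0 < b then X a (b-1) else 0) = 0 := by
    intro a b ha hb
    have := congrFun hx (⟨a, ha⟩, ⟨b, hb⟩)
    rw [Pi.zero_apply] at this
    have lhs : (if _ : 0 < a then x (⟨a - 1, lt_of_le_of_lt (Nat.sub_le _ _) ha⟩, ⟨b, hb⟩) else 0) +
        (if _ : 0 < b then x (⟨a, ha⟩, ⟨b - 1, lt_of_le_of_lt (Nat.sub_le _ _) hb⟩) else 0) = 0 := this
    by_cases h1 : 0 < a <;> by_cases h2 : 0 < b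
    · rw [dif_pos h1, dif_pos h2] at lhs
      rw [if_pos h1, if_pos h2, Xval (a-1) b (by omega) hb, Xval a (b-1) ha (by omega)]
      exact lhs
    · rw [dif_pos h1, dif_neg h2] at lhs
      rw [if_pos h1, if_neg h2, Xval (a-1) b (by omega) hb]
      exact lhs
    · rw [dif_neg h1, dif_pos h2] at lhs
      rw [if_neg h1, if_pos h2, Xval a (b-1) ha (by omega)]
      exact lhs
    · rw [dif_neg h1, dif_neg h2] at lhs
      rw [if_neg h1, if_neg h2]
      exact lhs
  have R1 : ∀ b : ℕ, b + 1 < n → X 0 b = 0 := by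
    intro b hb
    have := C 0 (b+1) hm (by omega)
    simpa using this
  have R2 : ∀ a : ℕ, a + 1 < m → X a 0 = 0 := by
    intro a ha
    have := C (a+1) 0 (by omega) hn
    simpa using this
  have R3 : ∀ a b : ℕ, a + 1 < m → b + 1 < n → X a (b+1) = - X (a+1) b := by
    intro a b ha hb
    have := C (a+1) (b+1) (by omega) (by omega)
    simp only [Nat.add_sub_cancel, if_pos (Nat.succ_pos a), if_pos (Nat.succ_pos b)] at this
    linear_combination this
  have Z1 : ∀ a b : ℕ, a + b + 1 < n → X a b = 0 := by
    intro a
    induction a with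
    | zero => intro b hb; exact R1 b (by omega)
    | succ a ih =>
      intro b hb
      by_cases ham : a + 1 < m
      · rw [show X (a+1) b = - - X (a+1) b by ring, ← R3 a b ham (by omega), ih (b+1) (by omega)]
        ring
      · exact Xout _ _ (Or.inl (by omega))
  have Z2 : ∀ b a : ℕ, a + b + 1 < m → X a b = 0 := by
    intro b
    induction b with
    | zero => intro a ha; exact R2 a (by omega)
    | succ b ih =>
      intro a ha
      by_cases hbn : b + 1 < n
      · rw [R3 a b (by omega) hbn, ih (a+1) (by omega)]
        ring
      · exact Xout _ _ (Or.inr (by omega))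
  have CH : ∀ t a b : ℕ, a + t < m → b + t < n → X a (b + t) = (-1:ℂ)^t * X (a + t) b := by
    intro t
    induction t with
    | zero => intro a b _ _; simp
    | succ t ih =>
      intro a b ha hb
      have h1 : X a (b + (t+1)) = X a ((b+1) + t) := by ring_nf
      rw [h1, ih a (b+1) (by omega) (by omega),
        R3 (a+t) b (by omega) (by omega)]
      have h2 : a + (t+1) = (a + t) + 1 := by ring
      rw [h2, pow_succ]
      ring
  -- now the main computation
  funext p
  obtain ⟨i, j⟩ := p
  have hi := i.2
  have hj := j.2
  show (if max m n ≤ i.val + j.val + 1 then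
      (-1:ℂ)^(m - 1 - i.val) * cext (min m n) (Phi0 m n hm hn x) (i.val + j.val + 1 - max m n) else 0)
      = x (i, j)
  have hxij : x (i, j) = X i.val j.val := by
    rw [Xval i.val j.val hi hj]
  by_cases hk : max m n ≤ i.val + j.val + 1
  · rw [if_pos hk]
    set t : ℕ := i.val + j.val + 1 - max m n with htdef
    have htlt : t < min m n := by omega
    have hcext : cext (min m n) (Phi0 m n hm hn x) t = x (⟨m - 1, by omega⟩, ⟨(max m n - m) + t, by omega⟩) := by
      unfold cext
      rw [dif_pos htlt]
      rfl
    rw [hcext, ← Xval (m-1) ((max m n - m) + t) (by omega) (by omega)]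
    have ht2 : (max m n - m) + t = j.val - (m - 1 - i.val) := by omega
    have hch := CH (m - 1 - i.val) i.val (j.val - (m - 1 - i.val)) (by omega) (by omega)
    have e1 : j.val - (m - 1 - i.val) + (m - 1 - i.val) = j.val := by omega
    have e2 : i.val + (m - 1 - i.val) = m - 1 := by omega
    rw [e1, e2] at hch
    rw [hxij, hch, ht2]
  · rw [if_neg hk, hxij]
    have : i.val + j.val + 1 < m ∨ i.val + j.val + 1 < n := by omega
    rcases this with h | h
    · exact (Z2 j.val i.val h).symm
    · exact (Z1 i.val j.val h).symm

lemma finrank_ker_Lmap (m n : ℕ) (hm : 0 < m) (hn : 0 < n) :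
    finrank ℂ (LinearMap.ker (Lmap m n)) = min m n := by
  let F : LinearMap.ker (Lmap m n) →ₗ[ℂ] (Fin (min m n) → ℂ) :=
    (Phi0 m n hm hn).comp (LinearMap.ker (Lmap m n)).subtype
  let G : (Fin (min m n) → ℂ) →ₗ[ℂ] LinearMap.ker (Lmap m n) :=
    LinearMap.codRestrict _ (Psi m n) (fun c => by
      rw [LinearMap.mem_ker]; exact Lmap_Psi m n hm hn c)
  let e : LinearMap.ker (Lmap m n) ≃ₗ[ℂ] (Fin (min m n) → ℂ) :=
    LinearEquiv.ofLinear F G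
      (LinearMap.ext fun c => Phi0_Psi m n hm hn c)
      (LinearMap.ext fun x => Subtype.ext
        (Psi_Phi0 m n hm hn x.1 (LinearMap.mem_ker.mp x.2)))
  rw [e.finrank_eq, Module.finrank_fin_fun]

lemma Lmap_single (m n : ℕ) (i : Fin m) (j : Fin n) :
    Lmap m n (Pi.single (i, j) (1:ℂ)) =
      (if h : i.val + 1 < m then Pi.single ((⟨i.val+1, h⟩ : Fin m), j) (1:ℂ) else 0) +
      (if h : j.val + 1 < n then Pi.single (i, (⟨j.val+1, h⟩ : Fin n)) (1:ℂ) else 0) := by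
  classical
  funext q
  obtain ⟨a, b⟩ := q
  simp only [Lmap, LinearMap.coe_mk, AddHom.coe_mk]
  have ha := a.2
  have hb := b.2
  have hi := i.2
  have hj := j.2
  simp only [Pi.single_apply, Pi.add_apply, Prod.mk.injEq, Fin.ext_iff, Pi.zero_apply,
    apply_dite (fun (y : (Fin m × Fin n) → ℂ) => y (a, b)), Pi.zero_apply]
  split_ifs <;> simp_all <;> omega

/-- The tensor sum 𝔩 = 𝔪 ⊗ 1 + 1 ⊗ 𝔫 of regular nilpotent endomorphisms of ℂ^m and ℂ^n
has rank mn − min(m,n). -/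
theorem rank_tensor_sum_regular_nilpotent (m n : ℕ) (hm : 0 < m) (hn : 0 < n)
    (f : Module.End ℂ (Fin m → ℂ)) (g : Module.End ℂ (Fin n → ℂ))
    (hfnil : IsNilpotent f) (hgnil : IsNilpotent g)
    (hf : Module.finrank ℂ (LinearMap.range f) = m - 1)
    (hg : Module.finrank ℂ (LinearMap.range g) = n - 1) :
    Module.finrank ℂ (LinearMap.range
      (TensorProduct.map f LinearMap.id + TensorProduct.map LinearMap.id g)) =
      m * n - min m n := by
  classical
  obtain ⟨bV, hbV⟩ := exists_cyclic_basis hm f hfnil hf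
  obtain ⟨bW, hbW⟩ := exists_cyclic_basis hn g hgnil hg
  set B := bV.tensorProduct bW with hB
  set l := TensorProduct.map f LinearMap.id + TensorProduct.map LinearMap.id g with hl
  set eS : ((Fin m × Fin n) → ℂ) →ₗ[ℂ] ((Fin m → ℂ) ⊗[ℂ] (Fin n → ℂ)) :=
    (B.equivFun.symm : _ ≃ₗ[ℂ] _).toLinearMap with heS
  have hsingle : ∀ p : Fin m × Fin n, eS (Pi.single p 1) = B p := by
    intro p
    rw [heS]
    simp only [LinearEquiv.coe_coe, Basis.equivFun_symm_apply]
    rw [Finset.sum_eq_single_of_mem p (Finset.mem_univ _)]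
    · rw [Pi.single_eq_same, one_smul]
    · intro q _ hq
      rw [Pi.single_eq_of_ne hq, zero_smul]
  have hcomm : l ∘ₗ eS = eS ∘ₗ Lmap m n := by
    apply (Pi.basisFun ℂ (Fin m × Fin n)).ext
    intro p
    obtain ⟨i, j⟩ := p
    have hpb : (Pi.basisFun ℂ (Fin m × Fin n)) (i, j) = Pi.single (i, j) 1 := by
      simp [Pi.basisFun_apply]
    rw [LinearMap.comp_apply, LinearMap.comp_apply, hpb, hsingle, Lmap_single]
    have hBij : B (i, j) = bV i ⊗ₜ[ℂ] bW j := Basis.tensorProduct_apply bV bW i j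
    rw [hBij, hl]
    rw [LinearMap.add_apply, TensorProduct.map_tmul, TensorProduct.map_tmul,
      LinearMap.id_apply, LinearMap.id_apply, hbV i, hbW j]
    rw [map_add]
    congr 1
    · split
      · rw [hsingle]
        exact (Basis.tensorProduct_apply bV bW _ _).symm
      · rw [map_zero, TensorProduct.zero_tmul]
    · split
      · rw [hsingle]
        exact (Basis.tensorProduct_apply bV bW _ _).symm
      · rw [map_zero, TensorProduct.tmul_zero]
  have hrange : LinearMap.range l = Submodule.map eS (LinearMap.range (Lmap m n)) := by
    rw [← LinearMap.range_comp, ← hcomm, LinearMap.range_comp_of_range_eq_top]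
    exact LinearEquiv.range _
  rw [hrange, LinearEquiv.finrank_map_eq]
  have h1 := LinearMap.finrank_range_add_finrank_ker (Lmap m n)
  rw [finrank_ker_Lmap m n hm hn] at h1
  have h2 : finrank ℂ ((Fin m × Fin n) → ℂ) = m * n := by
    rw [Module.finrank_pi, Fintype.card_prod, Fintype.card_fin, Fintype.card_fin]
  rw [h2] at h1
  omega
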